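/- Let A and A' be two n-dimensional algebras over a finite field K. If A and A' are isotopic, then the vertex-colored graphs G₁(A) and G₁(A') are isomorphic. Reciprocally, if G₁(A) and G₁(A') are isomorphic, then there exist three bijective maps f, g, h from A to A' (not necessarily linear) such that f(u)g(v) = h(uv) for all u, v ∈ A. -/

import Mathlib

/-- Vertices of the graphs `G₁(A)` and `G₂(A)`: row vertices `r u`, column
vertices `c u`, symbol vertices `s u` and cell vertices `t u v`. -/
inductive Vert (A : Type*) : Type _
  | r : A → Vert A
  | c : A → Vert A
  | s : A → Vert A
  | t : A → A → Vert A

section Graphs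

variable {A : Type*} [Zero A]

/-- The left annihilator `Ann_{A⁻}(A)` of the algebra with product `mul`. -/
def annL (mul : A → A → A) : Set A := {u | ∀ v, mul u v = 0}

/-- The right annihilator `Ann_{A⁺}(A)` of the algebra with product `mul`. -/
def annR (mul : A → A → A) : Set A := {u | ∀ v, mul v u = 0}

/-- The derived set `A² = {uv : u, v ∈ A}` of the algebra with product `mul`. -/
def derived (mul : A → A → A) : Set A := {w | ∃ u v, mul u v = w}

/-- The vertex set of `G₁(A)` and `G₂(A)`:
`R_A = {r_u : u ∈ A ∖ Ann_{A⁻}(A)}`, `C_A = {c_u : u ∈ A ∖ Ann_{A⁺}(A)}`,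
`S_A = {s_u : u ∈ A² ∖ {0}}`, `T_A = {t_{u,v} : u, v ∈ A, uv ≠ 0}`. -/
def IsVert (mul : A → A → A) : Vert A → Prop
  | .r u => u ∉ annL mul
  | .c u => u ∉ annR mul
  | .s u => u ∈ derived mul ∧ u ≠ 0
  | .t u v => mul u v ≠ 0

/-- The adjacency relation of `G₁(A)`: edges `r_u t_{u,v}`, `c_v t_{u,v}` and
`s_{uv} t_{u,v}` for every `u, v ∈ A` with `uv ≠ 0`. -/
inductive G1Adj (mul : A → A → A) : Vert A → Vert A → Prop
  | rt (u v : A) : mul u v ≠ 0 → G1Adj mul (.r u) (.t u v)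
  | tr (u v : A) : mul u v ≠ 0 → G1Adj mul (.t u v) (.r u)
  | ct (u v : A) : mul u v ≠ 0 → G1Adj mul (.c v) (.t u v)
  | tc (u v : A) : mul u v ≠ 0 → G1Adj mul (.t u v) (.c v)
  | st (u v : A) : mul u v ≠ 0 → G1Adj mul (.s (mul u v)) (.t u v)
  | ts (u v : A) : mul u v ≠ 0 → G1Adj mul (.t u v) (.s (mul u v))

lemma G1Adj.ne {mul : A → A → A} {x y : Vert A} (h : G1Adj mul x y) : x ≠ y := by
  cases h <;> simp

/-- The graph `G₁(A)`, on the vertex set `R_A ∪ C_A ∪ S_A ∪ T_A`. -/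
def G1 (mul : A → A → A) : SimpleGraph {x : Vert A // IsVert mul x} where
  Adj x y := G1Adj mul x.1 y.1
  symm := by constructor; rintro ⟨x, hx⟩ ⟨y, hy⟩ h; cases h <;> constructor <;> assumption
  loopless := ⟨fun x h => G1Adj.ne h rfl⟩

/-- The adjacency relation of `G₂(A)`: that of `G₁(A)` together with the extra
edges `r_u c_u` for `u ∈ A ∖ Ann_A(A)`, `c_u s_u` for `u ∈ A² ∖ Ann_{A⁺}(A)`
and `r_u s_u` for `u ∈ A² ∖ Ann_{A⁻}(A)`. -/
inductive G2Adj (mul : A → A → A) : Vert A → Vert A → Prop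
  | g1 {x y : Vert A} : G1Adj mul x y → G2Adj mul x y
  | rc (u : A) : u ∉ annL mul ∩ annR mul → G2Adj mul (.r u) (.c u)
  | cr (u : A) : u ∉ annL mul ∩ annR mul → G2Adj mul (.c u) (.r u)
  | cs (u : A) : u ∈ derived mul \ annR mul → G2Adj mul (.c u) (.s u)
  | sc (u : A) : u ∈ derived mul \ annR mul → G2Adj mul (.s u) (.c u)
  | rs (u : A) : u ∈ derived mul \ annL mul → G2Adj mul (.r u) (.s u)
  | sr (u : A) : u ∈ derived mul \ annL mul → G2Adj mul (.s u) (.r u)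

lemma G2Adj.ne {mul : A → A → A} {x y : Vert A} (h : G2Adj mul x y) : x ≠ y := by
  cases h with
  | g1 h => exact h.ne
  | _ => simp

/-- The graph `G₂(A)`, on the vertex set `R_A ∪ C_A ∪ S_A ∪ T_A`. -/
def G2 (mul : A → A → A) : SimpleGraph {x : Vert A // IsVert mul x} where
  Adj x y := G2Adj mul x.1 y.1
  symm := by
    constructor
    rintro ⟨x, hx⟩ ⟨y, hy⟩ h
    cases h with
    | g1 h => exact .g1 (by cases h <;> constructor <;> assumption)
    | rc u h => exact .cr u h
    | cr u h => exact .rc u h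
    | cs u h => exact .sc u h
    | sc u h => exact .cs u h
    | rs u h => exact .sr u h
    | sr u h => exact .rs u h
  loopless := ⟨fun x h => G2Adj.ne h rfl⟩

/-- The color of a vertex: row, column, symbol or cell. -/
def Vert.color : Vert A → Fin 4
  | .r _ => 0
  | .c _ => 1
  | .s _ => 2
  | .t _ _ => 3

end Graphs

section MyHelpers

open Classical

variable {A A' : Type*} [Zero A] [Zero A'] {mul : A → A → A} {mul' : A' → A' → A'}

/-! ### Extraction functions -/

def rOf : Vert A → A | .r u => u | _ => 0
def cOf : Vert A → A | .c u => u | _ => 0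
def sOf : Vert A → A | .s u => u | _ => 0

lemma eq_r_of_color {x : Vert A} (h : x.color = 0) : x = .r (rOf x) := by
  cases x <;> simp_all [Vert.color, rOf]

lemma eq_c_of_color {x : Vert A} (h : x.color = 1) : x = .c (cOf x) := by
  cases x <;> simp_all [Vert.color, cOf]

lemma eq_s_of_color {x : Vert A} (h : x.color = 2) : x = .s (sOf x) := by
  cases x <;> simp_all [Vert.color, sOf]

lemma eq_t_of_color {x : Vert A} (h : x.color = 3) : ∃ u v, x = .t u v := by
  cases x <;> simp_all [Vert.color]

lemma G1Adj_r_t {a u v : A} (h : G1Adj mul (.r a) (.t u v)) : a = u := by cases h; rfl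
lemma G1Adj_c_t {a u v : A} (h : G1Adj mul (.c a) (.t u v)) : a = v := by cases h; rfl
lemma G1Adj_s_t {a u v : A} (h : G1Adj mul (.s a) (.t u v)) : a = mul u v := by cases h; rfl

/-! ### Direction 1 : isotopy gives a colored graph isomorphism -/

def vmap (f g h : A → A') : Vert A → Vert A'
  | .r u => .r (f u) | .c u => .c (g u) | .s u => .s (h u) | .t u v => .t (f u) (g v)

lemma mul_ne_of_vmap (f g : A → A') {h : A → A'} (hinj : Function.Injective h) (h0 : h 0 = 0)
    (key : ∀ u v, mul' (f u) (g v) = h (mul u v)) {u v : A} (huv : mul u v ≠ 0) :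
    mul' (f u) (g v) ≠ 0 := by
  intro H
  exact huv (hinj (((key u v).symm.trans H).trans h0.symm))

lemma isVert_vmap (f g h : A ≃ A') (h0 : h 0 = 0)
    (key : ∀ u v, mul' (f u) (g v) = h (mul u v)) :
    ∀ x : Vert A, IsVert mul x → IsVert mul' (vmap f g h x) := by
  intro x hx
  match x with
  | .r u =>
      intro H
      exact hx fun v => h.injective (((key u v).symm.trans (H (g v))).trans h0.symm)
  | .c u =>
      intro H
      exact hx fun v => h.injective (((key v u).symm.trans (H (f v))).trans h0.symm)
  | .s w =>
      obtain ⟨⟨u, v, rfl⟩, hne⟩ := hx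
      exact ⟨⟨f u, g v, key u v⟩, fun H => hne (h.injective (H.trans h0.symm))⟩
  | .t u v =>
      exact mul_ne_of_vmap f g h.injective h0 key hx

lemma adj_vmap (f g : A → A') (h : A ≃ A') (h0 : h 0 = 0)
    (key : ∀ u v, mul' (f u) (g v) = h (mul u v)) {x y : Vert A}
    (hxy : G1Adj mul x y) : G1Adj mul' (vmap f g h x) (vmap f g h y) := by
  cases hxy with
  | rt u v huv => exact .rt _ _ (mul_ne_of_vmap f g h.injective h0 key huv)
  | tr u v huv => exact .tr _ _ (mul_ne_of_vmap f g h.injective h0 key huv)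
  | ct u v huv => exact .ct _ _ (mul_ne_of_vmap f g h.injective h0 key huv)
  | tc u v huv => exact .tc _ _ (mul_ne_of_vmap f g h.injective h0 key huv)
  | st u v huv =>
      show G1Adj mul' (.s (h (mul u v))) _
      rw [← key u v]
      exact .st _ _ (mul_ne_of_vmap f g h.injective h0 key huv)
  | ts u v huv =>
      show G1Adj mul' _ (.s (h (mul u v)))
      rw [← key u v]
      exact .ts _ _ (mul_ne_of_vmap f g h.injective h0 key huv)

lemma vmap_symm (f g h : A ≃ A') (x : Vert A) :
    vmap f.symm g.symm h.symm (vmap f g h x) = x := by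
  cases x <;> simp [vmap]

lemma key_symm (f g h : A ≃ A') (key : ∀ u v, mul' (f u) (g v) = h (mul u v)) :
    ∀ u v, mul (f.symm u) (g.symm v) = h.symm (mul' u v) := by
  intro u v
  rw [Equiv.eq_symm_apply, ← key, f.apply_symm_apply, g.apply_symm_apply]

noncomputable def isoOfEquiv (f g h : A ≃ A') (h0 : h 0 = 0)
    (key : ∀ u v, mul' (f u) (g v) = h (mul u v)) :
    (G1 mul) ≃g (G1 mul') where
  toFun x := ⟨vmap f g h x.1, isVert_vmap f g h h0 key x.1 x.2⟩
  invFun y := ⟨vmap f.symm g.symm h.symm y.1,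
    isVert_vmap f.symm g.symm h.symm (by rw [Equiv.symm_apply_eq, h0]) (key_symm f g h key) y.1 y.2⟩
  left_inv x := Subtype.ext (vmap_symm f g h x.1)
  right_inv y := by
    refine Subtype.ext ?_
    have := vmap_symm f.symm g.symm h.symm y.1
    simpa using this
  map_rel_iff' := by
    intro x y
    show G1Adj mul' (vmap f g h x.1) (vmap f g h y.1) ↔ G1Adj mul x.1 y.1
    constructor
    · intro hadj
      have h0' : h.symm 0 = 0 := by rw [Equiv.symm_apply_eq, h0]
      have h2 := adj_vmap (mul := mul') (mul' := mul) f.symm g.symm h.symm h0'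
        (key_symm f g h key) hadj
      rwa [vmap_symm, vmap_symm] at h2
    · intro hadj
      exact adj_vmap f g h h0 key hadj

lemma isoOfEquiv_color (f g h : A ≃ A') (h0 : h 0 = 0)
    (key : ∀ u v, mul' (f u) (g v) = h (mul u v)) (x : {x : Vert A // IsVert mul x}) :
    ((isoOfEquiv f g h h0 key (mul := mul) (mul' := mul')) x).1.color = x.1.color := by
  obtain ⟨x, hx⟩ := x
  cases x <;> rfl

/-! ### Direction 2 : extraction of the maps from a colored graph isomorphism -/

variable (ψ : (G1 mul) ≃g (G1 mul'))

noncomputable def mapR (u : A) (hu : u ∉ annL mul) : A' := rOf (ψ ⟨.r u, hu⟩).1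
noncomputable def mapC (u : A) (hu : u ∉ annR mul) : A' := cOf (ψ ⟨.c u, hu⟩).1
noncomputable def mapS (w : A) (hw : w ∈ derived mul ∧ w ≠ 0) : A' := sOf (ψ ⟨.s w, hw⟩).1

lemma symm_color (hc : ∀ x, (ψ x).1.color = x.1.color) : ∀ y, (ψ.symm y).1.color = y.1.color := by
  intro y
  conv_rhs => rw [← ψ.apply_symm_apply y]
  rw [hc]

lemma mapR_spec (hc : ∀ x, (ψ x).1.color = x.1.color) (u : A) (hu : u ∉ annL mul) :
    (ψ ⟨.r u, hu⟩).1 = .r (mapR ψ u hu) := eq_r_of_color (hc _)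

lemma mapC_spec (hc : ∀ x, (ψ x).1.color = x.1.color) (u : A) (hu : u ∉ annR mul) :
    (ψ ⟨.c u, hu⟩).1 = .c (mapC ψ u hu) := eq_c_of_color (hc _)

lemma mapS_spec (hc : ∀ x, (ψ x).1.color = x.1.color) (w : A) (hw : w ∈ derived mul ∧ w ≠ 0) :
    (ψ ⟨.s w, hw⟩).1 = .s (mapS ψ w hw) := eq_s_of_color (hc _)

lemma mapR_not (hc : ∀ x, (ψ x).1.color = x.1.color) (u : A) (hu : u ∉ annL mul) : mapR ψ u hu ∉ annL mul' := by
  have h2 := (ψ ⟨.r u, hu⟩).2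
  rw [mapR_spec ψ hc u hu] at h2
  exact h2

lemma mapC_not (hc : ∀ x, (ψ x).1.color = x.1.color) (u : A) (hu : u ∉ annR mul) : mapC ψ u hu ∉ annR mul' := by
  have h2 := (ψ ⟨.c u, hu⟩).2
  rw [mapC_spec ψ hc u hu] at h2
  exact h2

lemma mapS_mem (hc : ∀ x, (ψ x).1.color = x.1.color) (w : A) (hw : w ∈ derived mul ∧ w ≠ 0) :
    mapS ψ w hw ∈ derived mul' ∧ mapS ψ w hw ≠ 0 := by
  have h2 := (ψ ⟨.s w, hw⟩).2
  rw [mapS_spec ψ hc w hw] at h2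
  exact h2

lemma mapR_symm (hc : ∀ x, (ψ x).1.color = x.1.color) (u : A) (hu : u ∉ annL mul) (hu' : mapR ψ u hu ∉ annL mul') :
    mapR ψ.symm (mapR ψ u hu) hu' = u := by
  have h1 : (⟨.r (mapR ψ u hu), hu'⟩ : {x : Vert A' // IsVert mul' x}) = ψ ⟨.r u, hu⟩ :=
    Subtype.ext (mapR_spec ψ hc u hu).symm
  show rOf (ψ.symm ⟨.r (mapR ψ u hu), hu'⟩).1 = u
  rw [h1, ψ.symm_apply_apply]
  rfl

lemma mapC_symm (hc : ∀ x, (ψ x).1.color = x.1.color) (u : A) (hu : u ∉ annR mul) (hu' : mapC ψ u hu ∉ annR mul') :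
    mapC ψ.symm (mapC ψ u hu) hu' = u := by
  have h1 : (⟨.c (mapC ψ u hu), hu'⟩ : {x : Vert A' // IsVert mul' x}) = ψ ⟨.c u, hu⟩ :=
    Subtype.ext (mapC_spec ψ hc u hu).symm
  show cOf (ψ.symm ⟨.c (mapC ψ u hu), hu'⟩).1 = u
  rw [h1, ψ.symm_apply_apply]
  rfl

lemma mapS_symm (hc : ∀ x, (ψ x).1.color = x.1.color) (w : A) (hw : w ∈ derived mul ∧ w ≠ 0)
    (hw' : mapS ψ w hw ∈ derived mul' ∧ mapS ψ w hw ≠ 0) :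
    mapS ψ.symm (mapS ψ w hw) hw' = w := by
  have h1 : (⟨.s (mapS ψ w hw), hw'⟩ : {x : Vert A' // IsVert mul' x}) = ψ ⟨.s w, hw⟩ :=
    Subtype.ext (mapS_spec ψ hc w hw).symm
  show sOf (ψ.symm ⟨.s (mapS ψ w hw), hw'⟩).1 = w
  rw [h1, ψ.symm_apply_apply]
  rfl

/-- The key structural lemma: the image of a cell vertex is determined by the
images of the corresponding row, column and symbol vertices. -/
lemma core (hc : ∀ x, (ψ x).1.color = x.1.color) {u v : A} (huv : mul u v ≠ 0) :
    mul' (mapR ψ u (fun H => huv (H v))) (mapC ψ v (fun H => huv (H u))) =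
      mapS ψ (mul u v) ⟨⟨u, v, rfl⟩, huv⟩ ∧
    mul' (mapR ψ u (fun H => huv (H v))) (mapC ψ v (fun H => huv (H u))) ≠ 0 := by
  set hru : u ∉ annL mul := fun H => huv (H v)
  set hcv : v ∉ annR mul := fun H => huv (H u)
  have hcol : ((ψ ⟨.t u v, huv⟩).1).color = 3 := hc _
  obtain ⟨u', v', hval⟩ := eq_t_of_color hcol
  have huv' : mul' u' v' ≠ 0 := by
    have h2 := (ψ ⟨.t u v, huv⟩).2
    rw [hval] at h2
    exact h2
  have hr : mapR ψ u hru = u' := by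
    have hadj : (G1 mul').Adj (ψ ⟨.r u, hru⟩) (ψ ⟨.t u v, huv⟩) :=
      ψ.map_rel_iff.mpr (G1Adj.rt u v huv)
    have : G1Adj mul' (.r (mapR ψ u hru)) (.t u' v') := by
      rw [← mapR_spec ψ hc u hru, ← hval]
      exact hadj
    exact G1Adj_r_t this
  have hcv' : mapC ψ v hcv = v' := by
    have hadj : (G1 mul').Adj (ψ ⟨.c v, hcv⟩) (ψ ⟨.t u v, huv⟩) :=
      ψ.map_rel_iff.mpr (G1Adj.ct u v huv)
    have : G1Adj mul' (.c (mapC ψ v hcv)) (.t u' v') := by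
      rw [← mapC_spec ψ hc v hcv, ← hval]
      exact hadj
    exact G1Adj_c_t this
  have hs : mapS ψ (mul u v) ⟨⟨u, v, rfl⟩, huv⟩ = mul' u' v' := by
    have hadj : (G1 mul').Adj (ψ ⟨.s (mul u v), ⟨⟨u, v, rfl⟩, huv⟩⟩) (ψ ⟨.t u v, huv⟩) :=
      ψ.map_rel_iff.mpr (G1Adj.st u v huv)
    have : G1Adj mul' (.s (mapS ψ (mul u v) ⟨⟨u, v, rfl⟩, huv⟩)) (.t u' v') := by
      rw [← mapS_spec ψ hc (mul u v) ⟨⟨u, v, rfl⟩, huv⟩, ← hval]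
      exact hadj
    exact G1Adj_s_t this
  rw [hr, hcv', hs]
  exact ⟨rfl, huv'⟩

/-! ### Globalizing the maps -/

noncomputable def Fmap (eL : ↥(annL mul) ≃ ↥(annL mul')) : A → A' := fun u =>
  if hu : u ∈ annL mul then (eL ⟨u, hu⟩).1 else mapR ψ u hu

noncomputable def Gmap (eR : ↥(annR mul) ≃ ↥(annR mul')) : A → A' := fun u =>
  if hu : u ∈ annR mul then (eR ⟨u, hu⟩).1 else mapC ψ u hu

noncomputable def Hmap (eD : {w : A // w ∉ derived mul} ≃ {w : A' // w ∉ derived mul'}) :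
    A → A' := fun w =>
  if hw : w ∈ derived mul ∧ w ≠ 0 then mapS ψ w hw
  else if hd : w ∈ derived mul then 0 else (eD ⟨w, hd⟩).1

lemma Fmap_leftInverse (hc : ∀ x, (ψ x).1.color = x.1.color) (hc' : ∀ y, (ψ.symm y).1.color = y.1.color)
    (eL : ↥(annL mul) ≃ ↥(annL mul')) :
    Function.LeftInverse (Fmap ψ.symm eL.symm) (Fmap ψ eL) := by
  intro u
  by_cases hu : u ∈ annL mul
  · simp only [Fmap, dif_pos hu, dif_pos (eL ⟨u, hu⟩).2, Subtype.coe_eta,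
      Equiv.symm_apply_apply]
  · simp only [Fmap, dif_neg hu, dif_neg (mapR_not ψ hc u hu)]
    exact mapR_symm ψ hc u hu _

lemma Gmap_leftInverse (hc : ∀ x, (ψ x).1.color = x.1.color) (hc' : ∀ y, (ψ.symm y).1.color = y.1.color)
    (eR : ↥(annR mul) ≃ ↥(annR mul')) :
    Function.LeftInverse (Gmap ψ.symm eR.symm) (Gmap ψ eR) := by
  intro u
  by_cases hu : u ∈ annR mul
  · simp only [Gmap, dif_pos hu, dif_pos (eR ⟨u, hu⟩).2, Subtype.coe_eta,
      Equiv.symm_apply_apply]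
  · simp only [Gmap, dif_neg hu, dif_neg (mapC_not ψ hc u hu)]
    exact mapC_symm ψ hc u hu _

lemma Hmap_leftInverse (hc : ∀ x, (ψ x).1.color = x.1.color) (hc' : ∀ y, (ψ.symm y).1.color = y.1.color)
    (h00 : (0 : A) ∈ derived mul) (h00' : (0 : A') ∈ derived mul')
    (eD : {w : A // w ∉ derived mul} ≃ {w : A' // w ∉ derived mul'}) :
    Function.LeftInverse (Hmap ψ.symm eD.symm) (Hmap ψ eD) := by
  intro w
  by_cases hw : w ∈ derived mul ∧ w ≠ 0
  · simp only [Hmap, dif_pos hw, dif_pos (mapS_mem ψ hc w hw)]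
    exact mapS_symm ψ hc w hw _
  · by_cases hd : w ∈ derived mul
    · have hw0 : w = 0 := by
        by_contra h0
        exact hw ⟨hd, h0⟩
      subst hw0
      simp only [Hmap, dif_pos hd, dif_neg hw]
      rw [dif_neg (by simp [h00'] : ¬((0 : A') ∈ derived mul' ∧ (0 : A') ≠ 0)),
        dif_pos h00']
    · have hne : ((eD ⟨w, hd⟩).1 ∉ derived mul') := (eD ⟨w, hd⟩).2
      simp only [Hmap, dif_neg hw, dif_neg hd,
        dif_neg (fun h : _ ∧ _ => hne h.1), dif_neg hne, Subtype.coe_eta,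
        Equiv.symm_apply_apply]

/-! ### Cardinality bookkeeping -/

lemma card_split {α : Type*} [Finite α] (p : α → Prop) :
    Nat.card {x // p x} + Nat.card {x // ¬p x} = Nat.card α := by
  classical
  rw [← Nat.card_sum]
  exact Nat.card_congr (Equiv.sumCompl p)

lemma card_succ {α : Type*} [Finite α] (p : α → Prop) (a : α) (ha : p a) :
    Nat.card {x // p x} = Nat.card {x // p x ∧ x ≠ a} + 1 := by
  classical
  have e : {x // p x} ≃ Option {x // p x ∧ x ≠ a} :=
    { toFun := fun x => if h : x.1 = a then none else some ⟨x.1, x.2, h⟩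
      invFun := fun o => o.elim ⟨a, ha⟩ fun y => ⟨y.1, y.2.1⟩
      left_inv := by
        rintro ⟨x, hx⟩
        by_cases h : x = a
        · subst h; simp
        · simp [h]
      right_inv := by
        rintro (_ | ⟨y, hy⟩)
        · simp
        · simp [hy.2] }
  have : Fintype {x // p x ∧ x ≠ a} := Fintype.ofFinite _
  rw [Nat.card_congr e, Nat.card_eq_fintype_card, Fintype.card_option,
    Nat.card_eq_fintype_card]

noncomputable def Requiv (hc : ∀ x, (ψ x).1.color = x.1.color) (hc' : ∀ y, (ψ.symm y).1.color = y.1.color) :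
    {u : A // u ∉ annL mul} ≃ {u : A' // u ∉ annL mul'} where
  toFun u := ⟨mapR ψ u.1 u.2, mapR_not ψ hc u.1 u.2⟩
  invFun u := ⟨mapR ψ.symm u.1 u.2, mapR_not ψ.symm hc' u.1 u.2⟩
  left_inv u := Subtype.ext (mapR_symm ψ hc u.1 u.2 _)
  right_inv u := Subtype.ext (mapR_symm ψ.symm hc' u.1 u.2 _)

noncomputable def Cequiv (hc : ∀ x, (ψ x).1.color = x.1.color) (hc' : ∀ y, (ψ.symm y).1.color = y.1.color) :
    {u : A // u ∉ annR mul} ≃ {u : A' // u ∉ annR mul'} where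
  toFun u := ⟨mapC ψ u.1 u.2, mapC_not ψ hc u.1 u.2⟩
  invFun u := ⟨mapC ψ.symm u.1 u.2, mapC_not ψ.symm hc' u.1 u.2⟩
  left_inv u := Subtype.ext (mapC_symm ψ hc u.1 u.2 _)
  right_inv u := Subtype.ext (mapC_symm ψ.symm hc' u.1 u.2 _)

noncomputable def Sequiv (hc : ∀ x, (ψ x).1.color = x.1.color) (hc' : ∀ y, (ψ.symm y).1.color = y.1.color) :
    {w : A // w ∈ derived mul ∧ w ≠ 0} ≃ {w : A' // w ∈ derived mul' ∧ w ≠ 0} where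
  toFun w := ⟨mapS ψ w.1 w.2, mapS_mem ψ hc w.1 w.2⟩
  invFun w := ⟨mapS ψ.symm w.1 w.2, mapS_mem ψ.symm hc' w.1 w.2⟩
  left_inv w := Subtype.ext (mapS_symm ψ hc w.1 w.2 _)
  right_inv w := Subtype.ext (mapS_symm ψ.symm hc' w.1 w.2 _)

end MyHelpers

theorem stmt_16 {K A A' : Type*} [Field K] [Finite K]
    [AddCommGroup A] [Module K A] [AddCommGroup A'] [Module K A']
    [Module.Finite K A] [Module.Finite K A'] (n : ℕ)
    (hA : Module.finrank K A = n) (hA' : Module.finrank K A' = n)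
    (mul : A →ₗ[K] A →ₗ[K] A) (mul' : A' →ₗ[K] A' →ₗ[K] A') :
    ((∃ f g h : A ≃ₗ[K] A', ∀ u v : A, mul' (f u) (g v) = h (mul u v)) →
      ∃ φ : (G1 fun a b : A => mul a b) ≃g (G1 fun a b : A' => mul' a b),
        ∀ x, (φ x).1.color = x.1.color) ∧
    ((∃ φ : (G1 fun a b : A => mul a b) ≃g (G1 fun a b : A' => mul' a b),
        ∀ x, (φ x).1.color = x.1.color) →
      ∃ f g h : A → A',
        Function.Bijective f ∧ Function.Bijective g ∧ Function.Bijective h ∧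
          ∀ u v : A, mul' (f u) (g v) = h (mul u v)) := by
  classical
  set mulF : A → A → A := fun a b => mul a b with hmulF
  set mulF' : A' → A' → A' := fun a b => mul' a b with hmulF'
  constructor
  · rintro ⟨f, g, h, key⟩
    refine ⟨isoOfEquiv (mul := mulF) (mul' := mulF') f.toEquiv g.toEquiv h.toEquiv
      (by simp) (fun u v => key u v), ?_⟩
    exact isoOfEquiv_color _ _ _ _ _
  · rintro ⟨φ, hc⟩
    have finA : Finite A := Module.finite_of_finite K
    have finA' : Finite A' := Module.finite_of_finite K
    have hc' : ∀ y, (φ.symm y).1.color = y.1.color := symm_color φ hc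
    have h00 : (0 : A) ∈ derived mulF := ⟨0, 0, by simp [hmulF]⟩
    have h00' : (0 : A') ∈ derived mulF' := ⟨0, 0, by simp [hmulF']⟩
    have hcardA : Nat.card A = Nat.card A' :=
      Nat.card_congr (LinearEquiv.ofFinrankEq (R := K) A A' (hA.trans hA'.symm)).toEquiv
    -- annihilator cardinalities
    obtain ⟨eL⟩ : Nonempty (↥(annL mulF) ≃ ↥(annL mulF')) := by
      rw [← Finite.card_eq]
      have h1 : Nat.card {u : A // u ∉ annL mulF} = Nat.card {u : A' // u ∉ annL mulF'} :=
        Nat.card_congr (Requiv φ hc hc')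
      have h2 : Nat.card {x : A // x ∈ annL mulF} + Nat.card {x : A // x ∉ annL mulF} =
          Nat.card A := card_split _
      have h3 : Nat.card {x : A' // x ∈ annL mulF'} + Nat.card {x : A' // x ∉ annL mulF'} =
          Nat.card A' := card_split _
      have h4 : Nat.card ↥(annL mulF) = Nat.card {x : A // x ∈ annL mulF} := rfl
      have h5 : Nat.card ↥(annL mulF') = Nat.card {x : A' // x ∈ annL mulF'} := rfl
      omega
    obtain ⟨eR⟩ : Nonempty (↥(annR mulF) ≃ ↥(annR mulF')) := by
      rw [← Finite.card_eq]
      have h1 : Nat.card {u : A // u ∉ annR mulF} = Nat.card {u : A' // u ∉ annR mulF'} :=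
        Nat.card_congr (Cequiv φ hc hc')
      have h2 : Nat.card {x : A // x ∈ annR mulF} + Nat.card {x : A // x ∉ annR mulF} =
          Nat.card A := card_split _
      have h3 : Nat.card {x : A' // x ∈ annR mulF'} + Nat.card {x : A' // x ∉ annR mulF'} =
          Nat.card A' := card_split _
      have h4 : Nat.card ↥(annR mulF) = Nat.card {x : A // x ∈ annR mulF} := rfl
      have h5 : Nat.card ↥(annR mulF') = Nat.card {x : A' // x ∈ annR mulF'} := rfl
      omega
    obtain ⟨eD⟩ : Nonempty ({w : A // w ∉ derived mulF} ≃ {w : A' // w ∉ derived mulF'}) := by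
      rw [← Finite.card_eq]
      have h1 : Nat.card {w : A // w ∈ derived mulF ∧ w ≠ 0} =
          Nat.card {w : A' // w ∈ derived mulF' ∧ w ≠ 0} :=
        Nat.card_congr (Sequiv φ hc hc')
      have h2 : Nat.card {x : A // x ∈ derived mulF} + Nat.card {x : A // x ∉ derived mulF} =
          Nat.card A := card_split _
      have h3 : Nat.card {x : A' // x ∈ derived mulF'} + Nat.card {x : A' // x ∉ derived mulF'} =
          Nat.card A' := card_split _
      have h4 : Nat.card {x : A // x ∈ derived mulF} =
          Nat.card {x : A // x ∈ derived mulF ∧ x ≠ 0} + 1 := card_succ _ 0 h00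
      have h5 : Nat.card {x : A' // x ∈ derived mulF'} =
          Nat.card {x : A' // x ∈ derived mulF' ∧ x ≠ 0} + 1 := card_succ _ 0 h00'
      omega
    refine ⟨Fmap φ eL, Gmap φ eR, Hmap φ eD, ?_, ?_, ?_, ?_⟩
    · exact Function.bijective_iff_has_inverse.mpr
        ⟨Fmap φ.symm eL.symm, Fmap_leftInverse φ hc hc' eL,
          by simpa [Function.RightInverse] using Fmap_leftInverse φ.symm hc' hc eL.symm⟩
    · exact Function.bijective_iff_has_inverse.mpr
        ⟨Gmap φ.symm eR.symm, Gmap_leftInverse φ hc hc' eR,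
          by simpa [Function.RightInverse] using Gmap_leftInverse φ.symm hc' hc eR.symm⟩
    · exact Function.bijective_iff_has_inverse.mpr
        ⟨Hmap φ.symm eD.symm, Hmap_leftInverse φ hc hc' h00 h00' eD,
          by simpa [Function.RightInverse] using Hmap_leftInverse φ.symm hc' hc h00' h00 eD.symm⟩
    · intro u v
      show mulF' (Fmap φ eL u) (Gmap φ eR v) = Hmap φ eD (mulF u v)
      by_cases huv : mulF u v = 0
      · rw [huv]
        have hH0 : Hmap φ eD (0 : A) = 0 := by
          simp only [Hmap]
          rw [dif_neg (by simp [h00] : ¬((0 : A) ∈ derived mulF ∧ (0 : A) ≠ 0)), dif_pos h00]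
        rw [hH0]
        by_cases hu : u ∈ annL mulF
        · have : Fmap φ eL u ∈ annL mulF' := by
            simp only [Fmap, dif_pos hu]
            exact (eL ⟨u, hu⟩).2
          exact this _
        · by_cases hv : v ∈ annR mulF
          · have : Gmap φ eR v ∈ annR mulF' := by
              simp only [Gmap, dif_pos hv]
              exact (eR ⟨v, hv⟩).2
            exact this _
          · by_contra hne
            have hFu : Fmap φ eL u = mapR φ u hu := dif_neg hu
            have hGv : Gmap φ eR v = mapC φ v hv := dif_neg hv
            rw [hFu, hGv] at hne
            have hcore := core φ.symm hc' (mul := mulF') (mul' := mulF)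
              (u := mapR φ u hu) (v := mapC φ v hv) hne
            have hr := mapR_symm φ hc u hu (fun H => hne (H (mapC φ v hv)))
            have hcv := mapC_symm φ hc v hv (fun H => hne (H (mapR φ u hu)))
            have := hcore.2
            rw [hr, hcv] at this
            exact this huv
      · have hu : u ∉ annL mulF := fun H => huv (H v)
        have hv : v ∉ annR mulF := fun H => huv (H u)
        have hFu : Fmap φ eL u = mapR φ u hu := dif_neg hu
        have hGv : Gmap φ eR v = mapC φ v hv := dif_neg hv
        have hH : Hmap φ eD (mulF u v) = mapS φ (mulF u v) ⟨⟨u, v, rfl⟩, huv⟩ :=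
          dif_pos ⟨⟨u, v, rfl⟩, huv⟩
        rw [hFu, hGv, hH]
        exact (core φ hc huv).1
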